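/- Let (d, Q, E) be a VASS and let (q, v), (q', v') be configurations. Suppose (Θ1) for every m ≥ 1 there is a pseudo-run from (q, v) to (q', v') that uses every arc of E at least m times, and (Θ2) there exist vectors Δ, Δ' ∈ ℕ^d with every coordinate ≥ 1 such that (q, v) →*ℕ (q, v + Δ) and (q', v' + Δ') →*ℕ (q', v'). Then (q, v) →*ℕ (q', v'). -/

import Mathlib

/-- Vectors in `ℤ^d`. -/
abbrev Vec (d : ℕ) : Type := Fin d → ℤ

/-- An arc of a `d`-dimensional VASS with states `Q`. -/
abbrev Arc (Q : Type) (d : ℕ) : Type := Q × Vec d × Q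

/-- `IsRunOn E S π q v q' v'`: the list of arcs `π` (all belonging to `E`) forms a
pseudo-run from `(q, v)` to `(q', v')`, all of whose vectors (including endpoints)
are nonnegative on every coordinate in `S`.  Taking `S = ∅` gives pseudo-runs,
`S = Set.univ` gives runs, and `S = ↑C` gives `C`-runs. -/
inductive IsRunOn {Q : Type} {d : ℕ} (E : Finset (Arc Q d)) (S : Set (Fin d)) :
    List (Arc Q d) → Q → Vec d → Q → Vec d → Prop
  | nil (q : Q) (v : Vec d) (hv : ∀ i ∈ S, 0 ≤ v i) :
      IsRunOn E S [] q v q v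
  | cons (q q' q'' : Q) (v v'' z : Vec d) (π : List (Arc Q d))
      (hv : ∀ i ∈ S, 0 ≤ v i) (he : (q, z, q') ∈ E)
      (ht : IsRunOn E S π q' (v + z) q'' v'') :
      IsRunOn E S ((q, z, q') :: π) q v q'' v''

/-- Glueing: `glue C v w` agrees with `v` on coordinates in `C` and with `w` outside `C`. -/
def glue {d : ℕ} (C : Finset (Fin d)) (v w : Vec d) : Vec d :=
  fun i => if i ∈ C then v i else w i

namespace VassProof

variable {Q : Type} {d : ℕ}

def src (a : Arc Q d) : Q := a.1
def lbl (a : Arc Q d) : Vec d := a.2.1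
def tgt (a : Arc Q d) : Q := a.2.2

/-- A chain (walk) of consecutive arcs. -/
inductive Chain : List (Arc Q d) → Q → Q → Prop
  | nil (q : Q) : Chain [] q q
  | cons (a : Arc Q d) (π : List (Arc Q d)) (r : Q) (h : Chain π (tgt a) r) :
      Chain (a :: π) (src a) r

theorem Chain.nil_iff {x y : Q} : Chain ([] : List (Arc Q d)) x y ↔ x = y := by
  constructor
  · rintro ⟨⟩; rfl
  · rintro rfl; exact Chain.nil x

theorem Chain.cons_iff {a : Arc Q d} {π : List (Arc Q d)} {x y : Q} :
    Chain (a :: π) x y ↔ x = src a ∧ Chain π (tgt a) y := by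
  constructor
  · rintro ⟨⟩; exact ⟨rfl, by assumption⟩
  · rintro ⟨rfl, h⟩; exact Chain.cons a π y h

theorem Chain.append {π ρ : List (Arc Q d)} {x y z : Q}
    (h1 : Chain π x y) (h2 : Chain ρ y z) : Chain (π ++ ρ) x z := by
  induction h1 with
  | nil q => exact h2
  | cons a π r h ih => exact Chain.cons a _ z (ih h2)

theorem Chain.append_inv {π ρ : List (Arc Q d)} {x z : Q}
    (h : Chain (π ++ ρ) x z) : ∃ y, Chain π x y ∧ Chain ρ y z := by
  induction π generalizing x with
  | nil => exact ⟨x, Chain.nil x, h⟩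
  | cons a π ih =>
    rw [List.cons_append, Chain.cons_iff] at h
    obtain ⟨rfl, h⟩ := h
    obtain ⟨y, h1, h2⟩ := ih h
    exact ⟨y, Chain.cons a π y h1, h2⟩

/-- effect of a list of arcs -/
def effL (π : List (Arc Q d)) : Vec d := (π.map lbl).sum

/-- effect of a multiset of arcs -/
def effM (M : Multiset (Arc Q d)) : Vec d := (M.map lbl).sum

theorem effL_nil : effL ([] : List (Arc Q d)) = 0 := rfl

theorem effL_cons (a : Arc Q d) (π : List (Arc Q d)) :
    effL (a :: π) = lbl a + effL π := by
  simp [effL]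

theorem effL_append (π ρ : List (Arc Q d)) :
    effL (π ++ ρ) = effL π + effL ρ := by
  simp [effL]

theorem effM_coe (π : List (Arc Q d)) : effM (π : Multiset (Arc Q d)) = effL π := by
  simp [effM, effL]

theorem effM_add (M N : Multiset (Arc Q d)) : effM (M + N) = effM M + effM N := by
  simp [effM]

theorem effM_nsmul (K : ℕ) (M : Multiset (Arc Q d)) : effM (K • M) = K • effM M := by
  induction K with
  | zero => simp [effM]
  | succ n ih => rw [succ_nsmul, succ_nsmul, effM_add, ih]

theorem effM_sub [DecidableEq Q] (M N : Multiset (Arc Q d)) (h : N ≤ M) :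
    effM (M - N) = effM M - effM N := by
  have := effM_add (M - N) N
  rw [tsub_add_cancel_of_le h] at this
  rw [this]; abel

/-- per-coordinate bound on all partial sums of effects -/
def bnd (π : List (Arc Q d)) : Vec d := (π.map (fun a i => |lbl a i|)).sum

theorem bnd_nil : bnd ([] : List (Arc Q d)) = 0 := rfl

theorem bnd_cons (a : Arc Q d) (π : List (Arc Q d)) (i : Fin d) :
    bnd (a :: π) i = |lbl a i| + bnd π i := by
  simp [bnd]

theorem bnd_nonneg (π : List (Arc Q d)) (i : Fin d) : 0 ≤ bnd π i := by
  induction π with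
  | nil => simp [bnd]
  | cons a π ih => rw [bnd_cons]; positivity

end VassProof

namespace VassProof

variable {Q : Type} {d : ℕ} {E : Finset (Arc Q d)} {S : Set (Fin d)}

theorem _root_.IsRunOn.eff {π : List (Arc Q d)} {q q' : Q} {v v' : Vec d}
    (h : IsRunOn E S π q v q' v') : v' = v + effL π := by
  induction h with
  | nil q v hv => simp [effL_nil]
  | cons q q' q'' v v'' z π hv he ht ih => rw [effL_cons, ih]; simp only [lbl]; abel

theorem _root_.IsRunOn.mem_E {π : List (Arc Q d)} {q q' : Q} {v v' : Vec d}
    (h : IsRunOn E S π q v q' v') : ∀ a ∈ π, a ∈ E := by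
  induction h with
  | nil q v hv => simp
  | cons q q' q'' v v'' z π hv he ht ih =>
    intro a ha
    rcases List.mem_cons.1 ha with rfl | ha
    · exact he
    · exact ih a ha

theorem _root_.IsRunOn.chain {π : List (Arc Q d)} {q q' : Q} {v v' : Vec d}
    (h : IsRunOn E S π q v q' v') : Chain π q q' := by
  induction h with
  | nil q v hv => exact Chain.nil q
  | cons q q' q'' v v'' z π hv he ht ih => exact Chain.cons (q, z, q') π q'' ih

theorem _root_.IsRunOn.last_nonneg {π : List (Arc Q d)} {q q' : Q} {v v' : Vec d}
    (h : IsRunOn E S π q v q' v') : ∀ i ∈ S, 0 ≤ v' i := by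
  induction h with
  | nil q v hv => exact hv
  | cons q q' q'' v v'' z π hv he ht ih => exact ih

theorem _root_.IsRunOn.append {π ρ : List (Arc Q d)} {q q' q'' : Q} {v v' v'' : Vec d}
    (h1 : IsRunOn E S π q v q' v') (h2 : IsRunOn E S ρ q' v' q'' v'') :
    IsRunOn E S (π ++ ρ) q v q'' v'' := by
  induction h1 with
  | nil q v hv => exact h2
  | cons q q' q''' v w z π hv he ht ih =>
    exact IsRunOn.cons q q' q'' v v'' z _ hv he (ih h2)

/-- runs (S = univ) can be shifted up by nonnegative vectors -/
theorem _root_.IsRunOn.shift_univ {π : List (Arc Q d)} {q q' : Q} {v v' : Vec d}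
    (h : IsRunOn E Set.univ π q v q' v') (u : Vec d) (hu : ∀ i, 0 ≤ u i) :
    IsRunOn E Set.univ π q (v + u) q' (v' + u) := by
  induction h with
  | nil q v hv =>
    exact IsRunOn.nil q (v + u) (fun i _ => by
      have := hv i (Set.mem_univ i); have := hu i
      simp only [Pi.add_apply]; linarith)
  | cons q q' q'' v v'' z π hv he ht ih =>
    refine IsRunOn.cons q q' q'' (v + u) (v'' + u) z π (fun i _ => by
      have := hv i (Set.mem_univ i); have := hu i
      simp only [Pi.add_apply]; linarith) he ?_
    have : v + u + z = v + z + u := by abel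
    rw [this]; exact ih

/-- a chain of arcs of `E` is a pseudo-run from any starting value -/
theorem chain_isRunOn {π : List (Arc Q d)} {q q' : Q}
    (h : Chain π q q') (hE : ∀ a ∈ π, a ∈ E) (v : Vec d) :
    IsRunOn E ∅ π q v q' (v + effL π) := by
  induction h generalizing v with
  | nil q => rw [effL_nil, add_zero]; exact IsRunOn.nil q v (by simp)
  | cons a π r h ih =>
    have ha : a ∈ E := hE a List.mem_cons_self
    have hE' : ∀ b ∈ π, b ∈ E := fun b hb => hE b (List.mem_cons_of_mem a hb)
    have := ih hE' (v + lbl a)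
    obtain ⟨s, z, t⟩ := a
    refine IsRunOn.cons s t r v _ z π (by simp) ha ?_
    rw [effL_cons]
    have hv : v + lbl (s, z, t) + effL π = v + (lbl (s, z, t) + effL π) := by abel
    rw [← hv]
    exact this

/-- a pseudo-run starting high enough (above the drop bound) is a run -/
theorem _root_.IsRunOn.toRun {π : List (Arc Q d)} {q q' : Q} {v v' : Vec d}
    (h : IsRunOn E ∅ π q v q' v') (hb : ∀ i, bnd π i ≤ v i) :
    IsRunOn E Set.univ π q v q' v' := by
  induction h with
  | nil q v hv =>
    exact IsRunOn.nil q v (fun i _ => le_trans (bnd_nonneg [] i) (hb i))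
  | cons q q' q'' v v'' z π hv he ht ih =>
    refine IsRunOn.cons q q' q'' v v'' z π (fun i _ => ?_) he (ih fun i => ?_)
    · have h1 := hb i; have h2 := bnd_nonneg ((q, z, q') :: π) i; linarith
    · have h1 := hb i
      rw [bnd_cons] at h1
      have h2 : -(|lbl (q, z, q') i|) ≤ lbl (q, z, q') i := neg_abs_le _
      have : lbl (q, z, q') i = z i := rfl
      simp only [Pi.add_apply]
      linarith [h1, h2, this ▸ h2]

end VassProof

namespace VassProof
variable {Q : Type} {d : ℕ} [DecidableEq Q]

theorem countBEq (e : Arc Q d) (l : List (Arc Q d)) :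
    l.count e = Multiset.count e (l : Multiset (Arc Q d)) := by
  induction l with
  | nil => simp
  | cons a l ih =>
    have hc : ((a :: l : List (Arc Q d)) : Multiset (Arc Q d)) = a ::ₘ (l : Multiset (Arc Q d)) := rfl
    rw [hc, Multiset.count_cons, List.count_cons, ih]
    by_cases h : a = e
    · simp [h]
    · simp [h, beq_iff_eq]
      exact fun h2 => h h2.symm

end VassProof

namespace VassProof

variable {Q : Type} {d : ℕ} [DecidableEq Q]

def degOut (M : Multiset (Arc Q d)) (u : Q) : ℕ := (M.filter (fun a => src a = u)).card
def degIn (M : Multiset (Arc Q d)) (u : Q) : ℕ := (M.filter (fun a => tgt a = u)).card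

theorem degOut_add (M N : Multiset (Arc Q d)) (u : Q) :
    degOut (M + N) u = degOut M u + degOut N u := by
  simp [degOut, Multiset.filter_add]

theorem degIn_add (M N : Multiset (Arc Q d)) (u : Q) :
    degIn (M + N) u = degIn M u + degIn N u := by
  simp [degIn, Multiset.filter_add]

theorem degOut_cons (a : Arc Q d) (M : Multiset (Arc Q d)) (u : Q) :
    degOut (a ::ₘ M) u = degOut M u + (if src a = u then 1 else 0) := by
  simp only [degOut, Multiset.filter_cons]
  split_ifs <;> simp [Multiset.card_add] <;> omega

theorem degIn_cons (a : Arc Q d) (M : Multiset (Arc Q d)) (u : Q) :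
    degIn (a ::ₘ M) u = degIn M u + (if tgt a = u then 1 else 0) := by
  simp only [degIn, Multiset.filter_cons]
  split_ifs <;> simp [Multiset.card_add] <;> omega

theorem degOut_nsmul (K : ℕ) (M : Multiset (Arc Q d)) (u : Q) :
    degOut (K • M) u = K * degOut M u := by
  induction K with
  | zero => simp [degOut]
  | succ n ih => rw [succ_nsmul, degOut_add, ih]; ring

theorem degIn_nsmul (K : ℕ) (M : Multiset (Arc Q d)) (u : Q) :
    degIn (K • M) u = K * degIn M u := by
  induction K with
  | zero => simp [degIn]
  | succ n ih => rw [succ_nsmul, degIn_add, ih]; ring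

theorem degOut_sub_add (M N : Multiset (Arc Q d)) (h : N ≤ M) (u : Q) :
    degOut (M - N) u + degOut N u = degOut M u := by
  rw [← degOut_add, tsub_add_cancel_of_le h]

theorem degIn_sub_add (M N : Multiset (Arc Q d)) (h : N ≤ M) (u : Q) :
    degIn (M - N) u + degIn N u = degIn M u := by
  rw [← degIn_add, tsub_add_cancel_of_le h]

/-- balance identity for a chain -/
theorem Chain.balance {π : List (Arc Q d)} {x y : Q} (h : Chain π x y) (u : Q) :
    degOut (π : Multiset (Arc Q d)) u + (if y = u then 1 else 0) =
      degIn (π : Multiset (Arc Q d)) u + (if x = u then 1 else 0) := by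
  induction h with
  | nil q => rfl
  | cons a π r h ih =>
    have hc : ((a :: π : List (Arc Q d)) : Multiset (Arc Q d)) = a ::ₘ (π : Multiset (Arc Q d)) := by
      rfl
    rw [hc, degOut_cons, degIn_cons]
    split_ifs at * <;> omega

/-- extraction of a trail from `s` to `t` out of a multiset with the right imbalance -/
theorem trail_extract : ∀ (n : ℕ) (M : Multiset (Arc Q d)) (s t : Q),
    M.card = n →
    (∀ u, degOut M u + (if t = u then 1 else 0) = degIn M u + (if s = u then 1 else 0)) →
    ∃ w : List (Arc Q d), Chain w s t ∧ (w : Multiset (Arc Q d)) ≤ M := by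
  intro n
  induction n using Nat.strong_induction_on with
  | _ n ih =>
    intro M s t hcard hbal
    by_cases hst : s = t
    · subst hst
      exact ⟨[], Chain.nil s, by simp⟩
    · -- there is an arc leaving s
      have hb := hbal s
      rw [if_neg (fun h => hst h.symm), if_pos rfl] at hb
      have hpos : 0 < degOut M s := by omega
      rw [degOut, Multiset.card_pos_iff_exists_mem] at hpos
      obtain ⟨a, ha⟩ := hpos
      rw [Multiset.mem_filter] at ha
      obtain ⟨haM, hsrc⟩ := ha
      have hM : a ::ₘ M.erase a = M := Multiset.cons_erase haM
      have hn : 0 < n := by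
        rw [← hcard]
        exact Multiset.card_pos.2 (fun h => by simp [h] at haM)
      have hcard' : (M.erase a).card = n - 1 := by
        rw [← hM] at hcard
        simp [Multiset.card_cons] at hcard
        omega
      have hbal' : ∀ u, degOut (M.erase a) u + (if t = u then 1 else 0) =
          degIn (M.erase a) u + (if tgt a = u then 1 else 0) := by
        intro u
        have h1 := hbal u
        rw [← hM, degOut_cons, degIn_cons] at h1
        have hsu : (if src a = u then 1 else 0) = (if s = u then (1:ℕ) else 0) := by
          rw [hsrc]
        rw [hsu] at h1
        omega
      obtain ⟨w, hw, hwle⟩ := ih (n-1) (by omega) (M.erase a) (tgt a) t hcard' hbal'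
      refine ⟨a :: w, ?_, ?_⟩
      · rw [← hsrc]; exact Chain.cons a w t hw
      · have : ((a :: w : List (Arc Q d)) : Multiset (Arc Q d)) = a ::ₘ (w : Multiset (Arc Q d)) := rfl
        rw [this, ← hM]
        exact Multiset.cons_le_cons a hwle

/-- split a closed chain at a visited vertex -/
theorem Chain.split_at {w : List (Arc Q d)} {x y : Q} (h : Chain w x y)
    {e : Arc Q d} (he : e ∈ w) :
    ∃ α β, w = α ++ β ∧ Chain α x (tgt e) ∧ Chain β (tgt e) y := by
  obtain ⟨α', β', rfl⟩ := List.append_of_mem he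
  obtain ⟨m, h1, h2⟩ := Chain.append_inv h
  rw [Chain.cons_iff] at h2
  obtain ⟨rfl, h2⟩ := h2
  refine ⟨α' ++ [e], β', by simp, ?_, h2⟩
  exact Chain.append h1 (Chain.cons e [] (tgt e) (Chain.nil (tgt e)))

/-- if a chain starts inside `p` and ends outside, some arc exits `p` -/
theorem Chain.exit {w : List (Arc Q d)} {x y : Q} (h : Chain w x y)
    (p : Q → Prop) (hx : p x) (hy : ¬ p y) :
    ∃ e ∈ w, p (src e) ∧ ¬ p (tgt e) := by
  induction w generalizing x with
  | nil => rw [Chain.nil_iff] at h; exact absurd (h ▸ hx) hy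
  | cons a w ihw =>
    rw [Chain.cons_iff] at h
    obtain ⟨rfl, h⟩ := h
    by_cases hpa : p (tgt a)
    · obtain ⟨e, he, h1, h2⟩ := ihw h hpa
      exact ⟨e, List.mem_cons_of_mem a he, h1, h2⟩
    · exact ⟨a, List.mem_cons_self, hx, hpa⟩

theorem euler_aux : ∀ (n : ℕ) (M : Multiset (Arc Q d)) (q : Q) (w₀ : List (Arc Q d)),
    M.card = n →
    Chain w₀ q q →
    (∀ u, degOut M u = degIn M u) →
    (∀ a ∈ M, ∃ ω : List (Arc Q d), Chain ω q (src a) ∧ ∀ b ∈ ω, (b ∈ M ∨ b ∈ w₀)) →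
    ∃ w : List (Arc Q d), Chain w q q ∧
      (w : Multiset (Arc Q d)) = M + (w₀ : Multiset (Arc Q d)) := by
  intro n
  induction n using Nat.strong_induction_on with
  | _ n ih =>
    intro M q w₀ hcard hw₀ hbal hconn
    rcases Multiset.empty_or_exists_mem M with hM0 | ⟨a, haM⟩
    · exact ⟨w₀, hw₀, by rw [hM0, zero_add]⟩
    -- visited vertices of (q, w₀)
    set p : Q → Prop := fun u => u = q ∨ ∃ e ∈ w₀, tgt e = u with hp
    have hpq : p q := Or.inl rfl
    -- find b ∈ M with p (src b)
    have hbex : ∃ b ∈ M, p (src b) := by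
      by_cases hpa : p (src a)
      · exact ⟨a, haM, hpa⟩
      · obtain ⟨ω, hω, hωmem⟩ := hconn a haM
        obtain ⟨e, heω, h1, h2⟩ := hω.exit p hpq hpa
        rcases hωmem e heω with heM | hew₀
        · exact ⟨e, heM, h1⟩
        · exact absurd (Or.inr ⟨e, hew₀, rfl⟩) h2
    obtain ⟨b, hbM, hpb⟩ := hbex
    have hMb : b ::ₘ M.erase b = M := Multiset.cons_erase hbM
    -- extract a closed chain c at src b
    have hbal' : ∀ u, degOut (M.erase b) u + (if src b = u then 1 else 0) =
        degIn (M.erase b) u + (if tgt b = u then 1 else 0) := by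
      intro u
      have h1 := hbal u
      rw [← hMb, degOut_cons, degIn_cons] at h1
      omega
    obtain ⟨w₁, hw₁, hw₁le⟩ := trail_extract (M.erase b).card (M.erase b) (tgt b) (src b)
      rfl hbal'
    set c : List (Arc Q d) := b :: w₁ with hc
    have hcchain : Chain c (src b) (src b) := Chain.cons b w₁ (src b) hw₁
    have hcle : (c : Multiset (Arc Q d)) ≤ M := by
      have : (c : Multiset (Arc Q d)) = b ::ₘ (w₁ : Multiset (Arc Q d)) := rfl
      rw [this, ← hMb]
      exact Multiset.cons_le_cons b hw₁le
    have hccard : 0 < (c : Multiset (Arc Q d)).card := by simp [hc]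
    set M₂ := M - (c : Multiset (Arc Q d)) with hM₂
    have hM₂add : M₂ + (c : Multiset (Arc Q d)) = M := tsub_add_cancel_of_le hcle
    have hM₂card : M₂.card < n := by
      have := congrArg Multiset.card hM₂add
      rw [Multiset.card_add] at this
      omega
    -- balance of M₂
    have hcbal : ∀ u, degOut (c : Multiset (Arc Q d)) u = degIn (c : Multiset (Arc Q d)) u := by
      intro u
      have := hcchain.balance u
      omega
    have hbal₂ : ∀ u, degOut M₂ u = degIn M₂ u := by
      intro u
      have h1 := degOut_add M₂ (c : Multiset (Arc Q d)) u
      have h2 := degIn_add M₂ (c : Multiset (Arc Q d)) u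
      rw [hM₂add] at h1 h2
      have := hbal u; have := hcbal u
      omega
    -- splice c into w₀
    have hsplice : ∃ w₀' : List (Arc Q d), Chain w₀' q q ∧
        (w₀' : Multiset (Arc Q d)) = (c : Multiset (Arc Q d)) + (w₀ : Multiset (Arc Q d)) := by
      rcases hpb with hq | ⟨e, hew₀, hte⟩
      · refine ⟨c ++ w₀, ?_, by simp⟩
        rw [hq] at hcchain
        exact hcchain.append hw₀
      · obtain ⟨α, β, rfl, hα, hβ⟩ := hw₀.split_at hew₀
        rw [hte] at hα hβ
        refine ⟨α ++ (c ++ β), hα.append (hcchain.append hβ), ?_⟩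
        show ((α ++ (c ++ β) : List (Arc Q d)) : Multiset (Arc Q d)) = _
        simp only [← Multiset.coe_add]
        abel
    obtain ⟨w₀', hw₀', hw₀'eq⟩ := hsplice
    have hmem : ∀ b' : Arc Q d, (b' ∈ M ∨ b' ∈ w₀) → (b' ∈ M₂ ∨ b' ∈ w₀') := by
      intro b' hb'
      have h1 : b' ∈ M + (w₀ : Multiset (Arc Q d)) := by
        rw [Multiset.mem_add]
        rcases hb' with h | h
        · exact Or.inl h
        · exact Or.inr (Multiset.mem_coe.2 h)
      have h2 : M₂ + (w₀' : Multiset (Arc Q d)) = M + (w₀ : Multiset (Arc Q d)) := by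
        rw [hw₀'eq, ← add_assoc, hM₂add]
      rw [← h2, Multiset.mem_add] at h1
      rcases h1 with h | h
      · exact Or.inl h
      · exact Or.inr (Multiset.mem_coe.1 h)
    have hconn₂ : ∀ a' ∈ M₂, ∃ ω : List (Arc Q d), Chain ω q (src a') ∧
        ∀ b' ∈ ω, (b' ∈ M₂ ∨ b' ∈ w₀') := by
      intro a' ha'
      have ha'M : a' ∈ M := Multiset.mem_of_le (tsub_le_self) ha'
      obtain ⟨ω, hω, hωmem⟩ := hconn a' ha'M
      exact ⟨ω, hω, fun b' hb' => hmem b' (hωmem b' hb')⟩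
    obtain ⟨w, hw, hweq⟩ := ih M₂.card hM₂card M₂ q w₀' rfl hw₀' hbal₂ hconn₂
    refine ⟨w, hw, ?_⟩
    rw [hweq, hw₀'eq, ← add_assoc, hM₂add]

theorem euler (M : Multiset (Arc Q d)) (q : Q)
    (hbal : ∀ u, degOut M u = degIn M u)
    (hconn : ∀ a ∈ M, ∃ ω : List (Arc Q d), Chain ω q (src a) ∧ ∀ b ∈ ω, b ∈ M) :
    ∃ w : List (Arc Q d), Chain w q q ∧ (w : Multiset (Arc Q d)) = M := by
  obtain ⟨w, hw, hweq⟩ := euler_aux M.card M q [] rfl (Chain.nil q) hbal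
    (fun a ha => by
      obtain ⟨ω, h1, h2⟩ := hconn a ha
      exact ⟨ω, h1, fun b hb => Or.inl (h2 b hb)⟩)
  refine ⟨w, hw, ?_⟩
  rw [hweq]
  simp

end VassProof


open VassProof in
/-- if `Θ1` (pseudo-runs from `(q,v)` to `(q',v')` using every arc at least `m`
times, for every `m ≥ 1`) and `Θ2` (pumping runs by `Δ, Δ' ≥ 1`) hold, then there is a run
from `(q, v)` to `(q', v')`. -/
theorem vass_sufficient_condition {d : ℕ} {Q : Type} [DecidableEq Q]
    (hd : 1 ≤ d) (E : Finset (Arc Q d)) (q q' : Q) (v v' : Vec d)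
    (hv : ∀ i, 0 ≤ v i) (hv' : ∀ i, 0 ≤ v' i)
    (h1 : ∀ m : ℕ, 1 ≤ m →
      ∃ π, IsRunOn E ∅ π q v q' v' ∧ ∀ e ∈ E, m ≤ π.count e)
    (h2 : ∃ Δ Δ' : Vec d, (∀ i, 1 ≤ Δ i) ∧ (∀ i, 1 ≤ Δ' i) ∧
      (∃ π, IsRunOn E Set.univ π q v q (v + Δ)) ∧
      (∃ π, IsRunOn E Set.univ π q' (v' + Δ') q' v')) :
    ∃ π, IsRunOn E Set.univ π q v q' v' := by
  classical
  obtain ⟨Δ, Δ', hΔ, hΔ', ⟨θ₀, hθ₀⟩, ⟨θ₁, hθ₁⟩⟩ := h2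
  obtain ⟨πa, hπa, hπa1⟩ := h1 1 le_rfl
  obtain ⟨πb, hπb, hπbc⟩ := h1 (πa.length + 1) (by omega)
  have hπaE := hπa.mem_E
  have hπbE := hπb.mem_E
  have hθ₀E := hθ₀.mem_E
  have hθ₁E := hθ₁.mem_E
  set A : Multiset (Arc Q d) := (πa : Multiset (Arc Q d)) with hA
  set Bm : Multiset (Arc Q d) := (πb : Multiset (Arc Q d)) with hB
  set T : Multiset (Arc Q d) := (θ₀ : Multiset (Arc Q d)) + (θ₁ : Multiset (Arc Q d)) with hT
  set K : ℕ := θ₀.length + θ₁.length + 1 with hK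
  -- counting facts
  have hcA : ∀ e : Arc Q d, Multiset.count e A ≤ πa.length := fun e => by
    rw [hA, ← countBEq]; exact List.count_le_length
  have hcA0 : ∀ e : Arc Q d, e ∉ E → Multiset.count e A = 0 := fun e he => by
    rw [hA, Multiset.count_eq_zero, Multiset.mem_coe]
    exact fun hmem => he (hπaE e hmem)
  have hcB : ∀ e ∈ E, πa.length + 1 ≤ Multiset.count e Bm := fun e he => by
    rw [hB, ← countBEq]; exact hπbc e he
  have hAB : A ≤ Bm := by
    rw [Multiset.le_iff_count]
    intro e
    by_cases he : e ∈ E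
    · have := hcA e; have := hcB e he; omega
    · rw [hcA0 e he]; omega
  set G : Multiset (Arc Q d) := Bm - A with hG
  have hGc : ∀ e ∈ E, 1 ≤ Multiset.count e G := fun e he => by
    rw [hG, Multiset.count_sub]
    have := hcA e; have := hcB e he
    omega
  have hTc : ∀ e : Arc Q d, Multiset.count e T ≤ θ₀.length + θ₁.length := fun e => by
    rw [hT, Multiset.count_add, ← countBEq, ← countBEq]
    have h0 : θ₀.count e ≤ θ₀.length := List.count_le_length
    have h1' : θ₁.count e ≤ θ₁.length := List.count_le_length
    omega
  have hTc0 : ∀ e : Arc Q d, e ∉ E → Multiset.count e T = 0 := fun e he => by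
    rw [hT, Multiset.count_add, ← countBEq, ← countBEq]
    have h0 : e ∉ θ₀ := fun hm => he (hθ₀E e hm)
    have h1' : e ∉ θ₁ := fun hm => he (hθ₁E e hm)
    rw [List.count_eq_zero.2 h0, List.count_eq_zero.2 h1']
  have hTKG : T ≤ K • G := by
    rw [Multiset.le_iff_count]
    intro e
    rw [Multiset.count_nsmul]
    by_cases he : e ∈ E
    · have h0 := hTc e
      have h1' := hGc e he
      have h2' : K * 1 ≤ K * Multiset.count e G := Nat.mul_le_mul_left K h1'
      omega
    · rw [hTc0 e he]; omega
  set M : Multiset (Arc Q d) := K • G - T with hM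
  -- membership facts
  have hME : ∀ a ∈ M, a ∈ E := by
    intro a ha
    have h1' : 0 < Multiset.count a M := Multiset.count_pos.2 ha
    have h2' : Multiset.count a M ≤ K * Multiset.count a G := by
      rw [hM, Multiset.count_sub, Multiset.count_nsmul]; omega
    have h3' : 0 < Multiset.count a G := by
      rcases Nat.eq_zero_or_pos (Multiset.count a G) with h | h
      · rw [h, Nat.mul_zero] at h2'; omega
      · exact h
    have h4' : Multiset.count a G ≤ Multiset.count a Bm := by
      rw [hG, Multiset.count_sub]; omega
    have h5' : a ∈ Bm := Multiset.count_pos.1 (by omega)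
    exact hπbE a (Multiset.mem_coe.1 h5')
  have hEM : ∀ e ∈ E, e ∈ M := by
    intro e he
    have h1' := hGc e he
    have h2' := hTc e
    have h3' : K * 1 ≤ K * Multiset.count e G := Nat.mul_le_mul_left K h1'
    refine Multiset.count_pos.1 ?_
    rw [hM, Multiset.count_sub, Multiset.count_nsmul]
    omega
  -- balance
  have hdeg : ∀ u, degOut M u = degIn M u := by
    intro u
    have bA := hπa.chain.balance u
    have bB := hπb.chain.balance u
    rw [← hA] at bA
    rw [← hB] at bB
    have bθ₀ := hθ₀.chain.balance u
    have bθ₁ := hθ₁.chain.balance u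
    set i1 : ℕ := if q = u then 1 else 0 with hi1
    set i2 : ℕ := if q' = u then 1 else 0 with hi2
    have hGout : degOut G u + degOut A u = degOut Bm u := by
      rw [hG]; exact degOut_sub_add Bm A hAB u
    have hGin : degIn G u + degIn A u = degIn Bm u := by
      rw [hG]; exact degIn_sub_add Bm A hAB u
    have hGei : degOut G u = degIn G u := by omega
    have hMout : degOut M u + degOut T u = K * degOut G u := by
      rw [hM, degOut_sub_add _ _ hTKG, degOut_nsmul]
    have hMin : degIn M u + degIn T u = K * degIn G u := by
      rw [hM, degIn_sub_add _ _ hTKG, degIn_nsmul]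
    have hTei : degOut T u = degIn T u := by
      rw [hT, degOut_add, degIn_add]; omega
    rw [hGei] at hMout
    omega
  -- connectivity
  have hconn : ∀ a ∈ M, ∃ ω : List (Arc Q d), Chain ω q (src a) ∧ ∀ b ∈ ω, b ∈ M := by
    intro a ha
    have haE : a ∈ E := hME a ha
    have haπa : a ∈ πa := by
      have h1' := hπa1 a haE
      have : 0 < Multiset.count a A := by rw [hA, ← countBEq]; omega
      exact Multiset.mem_coe.1 (Multiset.count_pos.1 this)
    obtain ⟨α, β, hsplit⟩ := List.append_of_mem haπa
    have hch := hπa.chain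
    rw [hsplit] at hch
    obtain ⟨m, hα, hrest⟩ := Chain.append_inv hch
    rw [Chain.cons_iff] at hrest
    obtain ⟨rfl, _⟩ := hrest
    refine ⟨α, hα, fun b hb => ?_⟩
    have hbπa : b ∈ πa := by rw [hsplit]; exact List.mem_append_left _ hb
    exact hEM b (hπaE b hbπa)
  -- effects
  have hEπa : effL πa = v' - v := by
    funext i
    have := congrFun hπa.eff i
    simp only [Pi.add_apply, Pi.sub_apply] at this ⊢
    linarith
  have hEπb : effL πb = v' - v := by
    funext i
    have := congrFun hπb.eff i
    simp only [Pi.add_apply, Pi.sub_apply] at this ⊢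
    linarith
  have hEθ₀ : effL θ₀ = Δ := by
    funext i
    have := congrFun hθ₀.eff i
    simp only [Pi.add_apply] at this
    linarith
  have hEθ₁ : effL θ₁ = -Δ' := by
    funext i
    have := congrFun hθ₁.eff i
    simp only [Pi.add_apply, Pi.neg_apply] at this ⊢
    linarith
  have heffM : effM M = Δ' - Δ := by
    rw [hM, effM_sub _ _ hTKG, effM_nsmul, hT, effM_add, effM_coe, effM_coe,
      hG, effM_sub _ _ hAB, hA, hB, effM_coe, effM_coe, hEπa, hEπb, hEθ₀, hEθ₁]
    rw [sub_self, smul_zero]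
    abel
  -- Euler circuit
  obtain ⟨ζ, hζchain, hζeq⟩ := euler M q hdeg hconn
  have hζE : ∀ b ∈ ζ, b ∈ E := fun b hb => hME b (by rw [← hζeq]; exact Multiset.mem_coe.2 hb)
  have heffζ : effL ζ = Δ' - Δ := by rw [← effM_coe, hζeq, heffM]
  -- choice of the pumping amount c
  set c : ℕ := (∑ i, bnd ζ i + ∑ i, bnd πa i).toNat with hc
  have hsum1 : (0:ℤ) ≤ ∑ i, bnd ζ i := Finset.sum_nonneg fun i _ => bnd_nonneg ζ i
  have hsum2 : (0:ℤ) ≤ ∑ i, bnd πa i := Finset.sum_nonneg fun i _ => bnd_nonneg πa i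
  have hcval : (c : ℤ) = ∑ i, bnd ζ i + ∑ i, bnd πa i := by
    rw [hc]; exact Int.toNat_of_nonneg (by linarith)
  have hcζ : ∀ i, bnd ζ i ≤ (c : ℤ) := fun i => by
    have h1' : bnd ζ i ≤ ∑ j, bnd ζ j :=
      Finset.single_le_sum (f := fun j => bnd ζ j) (fun j _ => bnd_nonneg ζ j) (Finset.mem_univ i)
    rw [hcval]; linarith
  have hcπa : ∀ i, bnd πa i ≤ (c : ℤ) := fun i => by
    have h1' : bnd πa i ≤ ∑ j, bnd πa j :=
      Finset.single_le_sum (f := fun j => bnd πa j) (fun j _ => bnd_nonneg πa j) (Finset.mem_univ i)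
    rw [hcval]; linarith
  have hns : ∀ (n : ℕ) (x : Vec d) (i : Fin d), (n • x) i = (n : ℤ) * x i := fun n x i => by
    simp [Pi.smul_apply]
  -- segment 1 : pump up at q
  have seg1 : ∀ n : ℕ, ∃ ρ, IsRunOn E Set.univ ρ q v q (v + n • Δ) := by
    intro n
    induction n with
    | zero =>
      refine ⟨[], ?_⟩
      have : v + (0:ℕ) • Δ = v := by funext i; simp
      rw [this]
      exact IsRunOn.nil q v fun i _ => hv i
    | succ n ihn =>
      obtain ⟨ρ, hρ⟩ := ihn
      refine ⟨ρ ++ θ₀, hρ.append ?_⟩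
      have h := hθ₀.shift_univ (n • Δ) (fun i => by
        rw [hns n Δ i]
        have := hΔ i
        have : (0:ℤ) ≤ (n:ℤ) := Int.natCast_nonneg n
        nlinarith [hΔ i])
      have heq : v + Δ + n • Δ = v + (n+1) • Δ := by
        funext i
        simp only [Pi.add_apply, hns]
        push_cast; ring
      rw [heq] at h
      exact h
  -- segment 4 : pump down at q'
  have seg4 : ∀ n : ℕ, ∃ ρ, IsRunOn E Set.univ ρ q' (v' + n • Δ') q' v' := by
    intro n
    induction n with
    | zero =>
      refine ⟨[], ?_⟩
      have : v' + (0:ℕ) • Δ' = v' := by funext i; simp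
      rw [this]
      exact IsRunOn.nil q' v' fun i _ => hv' i
    | succ n ihn =>
      obtain ⟨ρ, hρ⟩ := ihn
      refine ⟨θ₁ ++ ρ, ?_⟩
      have h := hθ₁.shift_univ (n • Δ') (fun i => by
        rw [hns n Δ' i]
        have : (0:ℤ) ≤ (n:ℤ) := Int.natCast_nonneg n
        nlinarith [hΔ' i])
      have heq : v' + Δ' + n • Δ' = v' + (n+1) • Δ' := by
        funext i
        simp only [Pi.add_apply, hns]
        push_cast; ring
      rw [heq] at h
      exact h.append hρ
  -- segment 2 : Euler cycles at q
  have seg2 : ∀ j : ℕ, j ≤ c → ∃ ρ, IsRunOn E Set.univ ρ q (v + c • Δ) q (v + c • Δ + j • (Δ' - Δ)) := by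
    intro j hj
    induction j with
    | zero =>
      refine ⟨[], ?_⟩
      have : v + c • Δ + (0:ℕ) • (Δ' - Δ) = v + c • Δ := by funext i; simp
      rw [this]
      refine IsRunOn.nil q (v + c • Δ) fun i _ => ?_
      simp only [Pi.add_apply]
      rw [hns c Δ i]
      have := hv i
      have : (0:ℤ) ≤ (c:ℤ) := Int.natCast_nonneg c
      nlinarith [hΔ i, hv i]
    | succ j ihj =>
      obtain ⟨ρ, hρ⟩ := ihj (by omega)
      refine ⟨ρ ++ ζ, hρ.append ?_⟩
      have hrun0 := chain_isRunOn hζchain hζE (v + c • Δ + j • (Δ' - Δ))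
      have hjc : (j:ℤ) ≤ (c:ℤ) := by exact_mod_cast Nat.le_of_succ_le hj
      have h := hrun0.toRun (fun i => by
        simp only [Pi.add_apply, Pi.sub_apply]
        rw [hns c Δ i, hns j (Δ' - Δ) i]
        simp only [Pi.sub_apply]
        have h1' := hcζ i
        have h2' := hv i
        have h3' : (0:ℤ) ≤ (j:ℤ) := Int.natCast_nonneg j
        nlinarith [mul_nonneg (sub_nonneg.2 hjc) (sub_nonneg.2 (hΔ i)),
          mul_nonneg h3' (sub_nonneg.2 (hΔ' i))])
      have heq : v + c • Δ + j • (Δ' - Δ) + effL ζ = v + c • Δ + (j+1) • (Δ' - Δ) := by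
        rw [heffζ]
        funext i
        simp only [Pi.add_apply, Pi.sub_apply, hns]
        push_cast; ring
      rw [heq] at h
      exact h
  -- assemble
  obtain ⟨ρ₁, hρ₁⟩ := seg1 c
  obtain ⟨ρ₂, hρ₂⟩ := seg2 c le_rfl
  obtain ⟨ρ₄, hρ₄⟩ := seg4 c
  have heq2 : v + c • Δ + c • (Δ' - Δ) = v + c • Δ' := by
    funext i
    simp only [Pi.add_apply, Pi.sub_apply, hns]
    ring
  rw [heq2] at hρ₂
  -- segment 3 : the base pseudo-run, lifted
  have hrun3 := chain_isRunOn hπa.chain hπaE (v + c • Δ')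
  have seg3 : IsRunOn E Set.univ πa q (v + c • Δ') q' (v' + c • Δ') := by
    have h := hrun3.toRun (fun i => by
      simp only [Pi.add_apply]
      rw [hns c Δ' i]
      have h1' := hcπa i
      have h2' := hv i
      have : (0:ℤ) ≤ (c:ℤ) := Int.natCast_nonneg c
      nlinarith [hΔ' i])
    have heq3 : v + c • Δ' + effL πa = v' + c • Δ' := by
      rw [hEπa]
      funext i
      simp only [Pi.add_apply, Pi.sub_apply]
      ring
    rw [heq3] at h
    exact h
  exact ⟨ρ₁ ++ (ρ₂ ++ (πa ++ ρ₄)), hρ₁.append (hρ₂.append (seg3.append hρ₄))⟩
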